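/- For every integer k ≥ 3, the binary form p_{2k−1}(x,y) = C(2k−1,k) x^{k−1} y^{k−1} (x − y) of degree 2k−1 satisfies L_{ℚ(ζ_k)}(p_{2k−1}) = k + 1. -/

import Mathlib

open MvPolynomial

/-- The `K`-rank (length) of a binary form `f` of degree `d` over a subfield `K` of `ℂ`:
the least number of `d`-th powers of linear forms over `K` of which `f` is a
`K`-linear combination (`⊤` if no such representation exists). -/
noncomputable def Lrank (K : Subfield ℂ) (d : ℕ) (f : MvPolynomial (Fin 2) ℂ) : ℕ∞ :=
  sInf { n : ℕ∞ | ∃ r : ℕ, n = (r : ℕ∞) ∧ ∃ lam al be : Fin r → ℂ,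
    (∀ j, lam j ∈ K ∧ al j ∈ K ∧ be j ∈ K) ∧
    f = ∑ j, MvPolynomial.C (lam j) *
      (MvPolynomial.C (al j) * X 0 + MvPolynomial.C (be j) * X 1) ^ d }

/-- `zeta d = e^(2πi/d)`, the primitive `d`-th root of unity. -/
noncomputable def zeta (d : ℕ) : ℂ :=
  Complex.exp (2 * Real.pi * Complex.I / d)

open Finset


lemma zeta_prim (k : ℕ) (hk : k ≠ 0) : IsPrimitiveRoot (zeta k) k :=
  Complex.isPrimitiveRoot_exp k hk

lemma root_in_K (k : ℕ) (hk : 3 ≤ k) (ω : ℂ)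
    (hmem : ω ∈ Subfield.closure {zeta k}) (hpow : ω ^ (k + 1) = 1) :
    ω = 1 ∨ ω = -1 := by
  have hk0 : k ≠ 0 := by omega
  have hζ : IsPrimitiveRoot (zeta k) k := zeta_prim k hk0
  have hfin : IsOfFinOrder ω := isOfFinOrder_iff_pow_eq_one.2 ⟨k+1, by omega, hpow⟩
  set m := orderOf ω with hm
  have hdvd : m ∣ k + 1 := orderOf_dvd_of_pow_eq_one hpow
  have hmpos : 0 < m := hfin.orderOf_pos
  -- case split
  rcases Nat.lt_or_ge m 3 with hm3 | hm3
  · interval_cases m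
    · left; exact orderOf_eq_one_iff.1 hm.symm
    · have h2 : ω ^ 2 = 1 := by rw [hm]; exact pow_orderOf_eq_one ω
      have : (ω - 1) * (ω + 1) = 0 := by ring_nf; linear_combination h2
      rcases mul_eq_zero.1 this with h | h
      · left; linear_combination h
      · right; linear_combination h
  · exfalso
    have hωprim : IsPrimitiveRoot ω m := IsPrimitiveRoot.orderOf ω
    have hcop : Nat.Coprime m k := Nat.Coprime.coprime_dvd_left hdvd (by simpa using Nat.coprime_succ_self_left (n := k))
    have hcop' : (orderOf ω).Coprime k := hcop
    have hoζ : orderOf (zeta k) = k := (hζ.eq_orderOf).symm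
    have hoz : orderOf (ω * zeta k) = m * k := by
      rw [(Commute.all ω (zeta k)).orderOf_mul_eq_mul_orderOf_of_coprime]
      · rw [hoζ]
      · rw [hoζ]; exact hcop'
    have hzprim : IsPrimitiveRoot (ω * zeta k) (m * k) := by
      have := IsPrimitiveRoot.orderOf (ω * zeta k)
      rwa [hoz] at this
    -- the intermediate field
    set F := IntermediateField.adjoin ℚ ({zeta k} : Set ℂ) with hF
    have hζF : zeta k ∈ F := IntermediateField.mem_adjoin_simple_self ℚ (zeta k)
    have hubK : Subfield.closure {zeta k} ≤ F.toSubfield := by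
      apply Subfield.closure_le.2
      simpa using hζF
    have hωF : ω ∈ F := hubK hmem
    have hzF : ω * zeta k ∈ F := mul_mem hωF hζF
    have hζint : IsIntegral ℚ (zeta k) := (hζ.isIntegral (by omega)).tower_top
    have : FiniteDimensional ℚ F := IntermediateField.adjoin.finiteDimensional hζint
    have hrank : Module.finrank ℚ F = Nat.totient k := by
      rw [hF]
      rw [IntermediateField.adjoin.finrank hζint]
      rw [← Polynomial.cyclotomic_eq_minpoly_rat hζ (by omega)]
      rw [Polynomial.natDegree_cyclotomic]
    have hz' : minpoly ℚ ((⟨ω * zeta k, hzF⟩ : F)) = minpoly ℚ (ω * zeta k) := by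
      rw [← minpoly.algebraMap_eq (algebraMap F ℂ).injective ⟨ω * zeta k, hzF⟩]
      rfl
    have hdeg : (minpoly ℚ (ω * zeta k)).natDegree = Nat.totient (m * k) := by
      rw [← Polynomial.cyclotomic_eq_minpoly_rat hzprim (by positivity)]
      rw [Polynomial.natDegree_cyclotomic]
    have hdvd2 : (Nat.totient (m*k)) ∣ Nat.totient k := by
      have := minpoly.degree_dvd (IsIntegral.of_finite ℚ (⟨ω * zeta k, hzF⟩ : F))
      rwa [hz', hdeg, hrank] at this
    have htot : Nat.totient (m * k) = Nat.totient m * Nat.totient k :=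
      Nat.totient_mul hcop
    have hkpos : 0 < Nat.totient k := Nat.totient_pos.2 (by omega)
    have hle : Nat.totient m * Nat.totient k ≤ Nat.totient k :=
      Nat.le_of_dvd hkpos (htot ▸ hdvd2)
    have h1 : Nat.totient m ≤ 1 := by
      by_contra h
      push_neg at h
      nlinarith
    have h2 : Nat.totient m = 1 := le_antisymm h1 (Nat.totient_pos.2 hmpos)
    rcases Nat.totient_eq_one_iff.1 h2 with h | h <;> omega



lemma gsum {k : ℕ} {ζ : ℂ} (hζ : IsPrimitiveRoot ζ k) (a : ℕ) :
    ∑ j ∈ range k, (ζ ^ a) ^ j = if k ∣ a then (k : ℂ) else 0 := by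
  by_cases h : k ∣ a
  · simp [hζ.pow_eq_one_iff_dvd a |>.2 h, h]
  · rw [if_neg h]
    have h1 : ζ ^ a ≠ 1 := fun hc => h ((hζ.pow_eq_one_iff_dvd a).1 hc)
    rw [geom_sum_eq h1]
    have : (ζ ^ a) ^ k = 1 := by
      rw [← pow_mul, mul_comm, pow_mul, hζ.pow_eq_one, one_pow]
    simp [this]

lemma dvd_char {k a : ℕ} (hk : 0 < k) (ha : a ≤ 2 * k) :
    k ∣ a ↔ a = 0 ∨ a = k ∨ a = 2 * k := by
  constructor
  · rintro ⟨c, rfl⟩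
    have hc : c ≤ 2 := by
      by_contra h
      push_neg at h
      nlinarith
    interval_cases c <;> omega
  · rintro (rfl | rfl | rfl)
    · exact ⟨0, by ring⟩
    · exact ⟨1, by ring⟩
    · exact ⟨2, by ring⟩

lemma scalar_id (n : ℕ) (hn : 2 ≤ n) (x y : ℂ) :
    ((2*n+1).choose (n+1) : ℂ) * x^n * y^n * (x - y)
      = (∑ j ∈ range (n+1), ((zeta (n+1) ^ j - 1)/((n:ℂ)+1)) * (x + zeta (n+1)^j * y)^(2*n+1))
        + x^(2*n+1) - y^(2*n+1) := by
  set k := n + 1 with hkdef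
  set d := 2*n+1 with hddef
  set ζ := zeta k with hζdef
  have hk0 : k ≠ 0 := by omega
  have hζp : IsPrimitiveRoot ζ k := Complex.isPrimitiveRoot_exp k hk0
  have hkpos : 0 < k := by omega
  have hL : ∑ j ∈ range k, (ζ^j - 1) * (x + ζ^j*y)^d
      = ∑ m ∈ range (d+1), (x^m * y^(d-m) * ((d.choose m : ℕ):ℂ))
          * ((if k ∣ (d-m+1) then (k:ℂ) else 0) - (if k ∣ (d-m) then (k:ℂ) else 0)) := by
    calc ∑ j ∈ range k, (ζ^j-1)*(x+ζ^j*y)^d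
        = ∑ j ∈ range k, ∑ m ∈ range (d+1),
            (x^m*y^(d-m)*((d.choose m : ℕ):ℂ)) * ((ζ^(d-m+1))^j - (ζ^(d-m))^j) := by
          refine sum_congr rfl fun j _ => ?_
          rw [add_pow, mul_sum]
          refine sum_congr rfl fun m _ => ?_
          have e1 : (ζ^j)^(d-m) = (ζ^(d-m))^j := by
            rw [← pow_mul, ← pow_mul, mul_comm]
          have e2 : (ζ^(d-m+1))^j = ζ^j * (ζ^(d-m))^j := by
            rw [← mul_pow, ← pow_succ']
          rw [mul_pow, e1, e2]
          ring
      _ = ∑ m ∈ range (d+1), ∑ j ∈ range k,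
            (x^m*y^(d-m)*((d.choose m : ℕ):ℂ)) * ((ζ^(d-m+1))^j - (ζ^(d-m))^j) := by
          rw [sum_comm]
      _ = _ := by
          refine sum_congr rfl fun m _ => ?_
          rw [← mul_sum, sum_sub_distrib, gsum hζp, gsum hζp]
  have hInd : ∀ m ∈ range (d+1),
      (x^m * y^(d-m) * ((d.choose m : ℕ):ℂ))
          * ((if k ∣ (d-m+1) then (k:ℂ) else 0) - (if k ∣ (d-m) then (k:ℂ) else 0))
      = (if m = 0 then (x^m * y^(d-m) * ((d.choose m : ℕ):ℂ)) * k else 0)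
        + (if m = k then (x^m * y^(d-m) * ((d.choose m : ℕ):ℂ)) * k else 0)
        - (if m = n then (x^m * y^(d-m) * ((d.choose m : ℕ):ℂ)) * k else 0)
        - (if m = d then (x^m * y^(d-m) * ((d.choose m : ℕ):ℂ)) * k else 0) := by
    intro m hm
    rw [mem_range] at hm
    have hiff1 : (k ∣ (d-m+1)) ↔ (m = 0 ∨ m = k) := by
      rw [dvd_char hkpos (by omega)]; omega
    have hiff2 : (k ∣ (d-m)) ↔ (m = n ∨ m = d) := by
      rw [dvd_char hkpos (by omega)]; omega
    simp only [hiff1, hiff2]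
    split_ifs <;> first | ring1 | (exfalso; omega)
  rw [sum_congr rfl hInd] at hL
  rw [sum_sub_distrib, sum_sub_distrib, sum_add_distrib, sum_ite_eq' (range (d+1)) 0,
    sum_ite_eq' (range (d+1)) k, sum_ite_eq' (range (d+1)) n, sum_ite_eq' (range (d+1)) d,
    if_pos (by simp only [mem_range]; omega), if_pos (by simp only [mem_range]; omega),
    if_pos (by simp only [mem_range]; omega), if_pos (by simp only [mem_range]; omega)] at hL
  -- simplify binomials and powers in hL
  have hb0 : (d.choose 0 : ℕ) = 1 := Nat.choose_zero_right d
  have hbd : (d.choose d : ℕ) = 1 := Nat.choose_self d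
  have hbn : (d.choose n : ℕ) = d.choose k := by
    rw [show n = d - k by omega, Nat.choose_symm (by omega)]
  have hsum : ∑ j ∈ range k, ((ζ^j - 1)/((n:ℂ)+1)) * (x + ζ^j*y)^d
      = (1/((n:ℂ)+1)) * ∑ j ∈ range k, (ζ^j - 1) * (x + ζ^j*y)^d := by
    rw [mul_sum]
    refine sum_congr rfl fun j _ => ?_
    ring
  rw [hsum, hL]
  have hkc : ((n:ℂ)+1) ≠ 0 := by
    have : ((k:ℕ):ℂ) ≠ 0 := Nat.cast_ne_zero.2 hk0
    push_cast at this
    push_cast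
    convert this using 2 <;> norm_num [hkdef]
  have hkcast : ((k:ℕ):ℂ) = (n:ℂ) + 1 := by push_cast [hkdef]; ring
  rw [hb0, hbd, hbn, hkcast]
  have hd0 : d - 0 = d := by omega
  have hdk : d - k = n := by omega
  have hdn : d - n = k := by omega
  have hdd : d - d = 0 := by omega
  rw [hd0, hdk, hdn, hdd]
  have hxk : x^k = x * x^n := by rw [hkdef, pow_succ]; ring
  have hyk : y^k = y * y^n := by rw [hkdef, pow_succ]; ring
  have hxd : x^d = x^(2*n+1) := by rw [hddef]
  rw [hxk, hyk]
  field_simp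
  ring



lemma coeff_lin (a b : ℂ) (d m : ℕ) (hm : m ≤ d) :
    ((Polynomial.C a * Polynomial.X + Polynomial.C b) ^ d).coeff m
      = a^m * b^(d-m) * ((d.choose m : ℕ) : ℂ) := by
  rw [add_pow, Polynomial.finset_sum_coeff]
  have key : ∀ i ∈ range (d+1),
      ((Polynomial.C a * Polynomial.X)^i * Polynomial.C b ^ (d-i)
        * ((d.choose i : ℕ) : Polynomial ℂ)).coeff m
      = if i = m then a^m * b^(d-m) * ((d.choose m : ℕ):ℂ) else 0 := by
    intro i _
    have h1 : (Polynomial.C a * Polynomial.X)^i * Polynomial.C b ^ (d-i)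
        * ((d.choose i : ℕ) : Polynomial ℂ)
        = Polynomial.C (a^i * b^(d-i) * ((d.choose i : ℕ):ℂ)) * Polynomial.X ^ i := by
      rw [map_mul, map_mul, mul_pow, ← Polynomial.C_pow, ← Polynomial.C_pow,
        ← Polynomial.C_eq_natCast]
      ring
    rw [h1, Polynomial.coeff_C_mul, Polynomial.coeff_X_pow]
    by_cases h : i = m
    · subst h; simp
    · rw [if_neg (fun hc => h hc.symm), if_neg h, mul_zero]
  rw [sum_congr rfl key, sum_ite_eq' (range (d+1)) m, if_pos (mem_range.2 (by omega))]

lemma lower_aux (n r : ℕ) (hn : 2 ≤ n) (hr : r ≤ n + 1)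
    (lam al be : Fin r → ℂ)
    (hmem : ∀ j, al j ∈ Subfield.closure {zeta (n+1)} ∧ be j ∈ Subfield.closure {zeta (n+1)})
    (hroot : ∀ ω : ℂ, ω ∈ Subfield.closure {zeta (n+1)} → ω ^ (n+2) = 1 → ω = 1 ∨ ω = -1)
    (heq : (MvPolynomial.C (((2*n+1).choose (n+1) : ℕ) : ℂ)
        * MvPolynomial.X 0 ^ n * MvPolynomial.X 1 ^ n
        * (MvPolynomial.X 0 - MvPolynomial.X 1) : MvPolynomial (Fin 2) ℂ)
      = ∑ j, MvPolynomial.C (lam j) *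
          (MvPolynomial.C (al j) * MvPolynomial.X 0 + MvPolynomial.C (be j) * MvPolynomial.X 1)
            ^ (2*n+1)) :
    False := by
  set k := n + 1 with hkdef
  set d := 2*n+1 with hddef
  set A : ℂ := ((d.choose k : ℕ) : ℂ) with hAdef
  have hA0 : A ≠ 0 := Nat.cast_ne_zero.2 (Nat.choose_pos (by omega)).ne'
  -- function identity
  have hfun : ∀ u : ℂ, A * u^n * (u - 1) = ∑ j, lam j * (al j * u + be j)^d := by
    intro u
    have h := congrArg (MvPolynomial.eval (fun i : Fin 2 => if i = 0 then u else 1)) heq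
    simpa using h
  -- polynomial identity
  have hpoly : (Polynomial.C A) * (Polynomial.X^k - Polynomial.X^n)
      = ∑ j, Polynomial.C (lam j) * (Polynomial.C (al j) * Polynomial.X + Polynomial.C (be j))^d := by
    apply Polynomial.funext
    intro u
    simp only [Polynomial.eval_mul, Polynomial.eval_sub, Polynomial.eval_pow, Polynomial.eval_X,
      Polynomial.eval_C, Polynomial.eval_add, Polynomial.eval_finset_sum]
    rw [← hfun u, hkdef]
    ring
  -- moment sums
  set S : ℕ → ℂ := fun e => ∑ j, lam j * (al j)^e * (be j)^(d-e) with hSdef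
  have hS : ∀ e, e ≤ d → ((d.choose e : ℕ):ℂ) * S e
      = A * ((if e = k then 1 else 0) - (if e = n then 1 else 0)) := by
    intro e he
    have h := congrArg (fun P => Polynomial.coeff P e) hpoly
    simp only [Polynomial.coeff_C_mul, Polynomial.coeff_sub, Polynomial.coeff_X_pow,
      Polynomial.finset_sum_coeff] at h
    have h2 : ∀ j : Fin r, lam j * ((Polynomial.C (al j) * Polynomial.X + Polynomial.C (be j)) ^ d).coeff e
        = lam j * (al j ^ e * be j ^ (d-e) * ((d.choose e : ℕ):ℂ)) := fun j => by
      rw [coeff_lin _ _ _ _ he]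
    rw [Finset.sum_congr rfl fun j _ => h2 j] at h
    calc ((d.choose e : ℕ):ℂ) * S e
        = ∑ j, lam j * (al j ^ e * be j ^ (d-e) * ((d.choose e : ℕ):ℂ)) := by
          rw [hSdef]
          rw [mul_sum]
          exact Finset.sum_congr rfl fun j _ => by ring
      _ = A * ((if e = k then 1 else 0) - (if e = n then 1 else 0)) := h.symm
  have hSk : S k = 1 := by
    have h := hS k (by omega)
    rw [if_pos rfl, if_neg (by omega)] at h
    have h2 : A * S k = A * 1 := by
      calc A * S k = ((d.choose k : ℕ):ℂ) * S k := by rw [hAdef]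
        _ = A * ((1:ℂ) - 0) := h
        _ = A * 1 := by ring
    simpa using mul_left_cancel₀ hA0 h2
  have hSn : S n = -1 := by
    have h := hS n (by omega)
    rw [if_neg (by omega), if_pos rfl] at h
    have hbn : (d.choose n : ℕ) = d.choose k := by
      rw [show n = d - k by omega, Nat.choose_symm (by omega)]
    rw [hbn] at h
    have h2 : A * S n = A * (-1) := by
      calc A * S n = ((d.choose k : ℕ):ℂ) * S n := by rw [hAdef]
        _ = A * ((0:ℂ) - 1) := h
        _ = A * (-1) := by ring
    exact mul_left_cancel₀ hA0 h2
  have hS0 : ∀ e, e ≤ d → e ≠ k → e ≠ n → S e = 0 := by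
    intro e he hek hen
    have h := hS e he
    rw [if_neg hek, if_neg hen] at h
    have hb0 : ((d.choose e : ℕ):ℂ) ≠ 0 := Nat.cast_ne_zero.2 (Nat.choose_pos he).ne'
    have := h
    rw [sub_self, mul_zero] at this
    exact (mul_eq_zero.1 this).resolve_left hb0
  -- linear dependence
  have hnotli : ¬ LinearIndependent ℂ
      (fun i : Fin (k+1) => (fun j : Fin r => (al j)^(i:ℕ) * (be j)^(k-(i:ℕ)))) := by
    intro hli
    have hcard := hli.fintype_card_le_finrank
    rw [Module.finrank_fin_fun, Fintype.card_fin] at hcard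
    omega
  obtain ⟨g, hg, i0, hgi0⟩ := Fintype.not_linearIndependent_iff.1 hnotli
  have hrel : ∀ j, ∑ i : Fin (k+1), g i * ((al j)^(i:ℕ) * (be j)^(k-(i:ℕ))) = 0 := by
    intro j
    have h := congrFun hg j
    simpa using h
  -- step equations
  have hzero : ∀ m, m ≤ n → ∑ i : Fin (k+1), g i * S (m + (i:ℕ)) = 0 := by
    intro m hm
    have hsw : ∑ i : Fin (k+1), g i * S (m + (i:ℕ))
        = ∑ j, (lam j * (al j)^m * (be j)^(n-m))
            * (∑ i : Fin (k+1), g i * ((al j)^(i:ℕ) * (be j)^(k-(i:ℕ)))) := by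
      rw [hSdef]
      simp only [Finset.mul_sum]
      rw [Finset.sum_comm]
      refine Finset.sum_congr rfl fun j _ => Finset.sum_congr rfl fun i _ => ?_
      have e1 : (al j)^(m + (i:ℕ)) = (al j)^m * (al j)^(i:ℕ) := pow_add _ _ _
      have e2 : (be j)^(d - (m + (i:ℕ))) = (be j)^(n-m) * (be j)^(k-(i:ℕ)) := by
        rw [← pow_add]
        congr 1
        have : (i:ℕ) ≤ k := by omega
        omega
      rw [e1, e2]
      ring
    rw [hsw]
    refine Finset.sum_eq_zero fun j _ => ?_
    rw [hrel j, mul_zero]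
  have hstep : ∀ m (hm : m ≤ n), g ⟨k - m, by omega⟩ = g ⟨n - m, by omega⟩ := by
    intro m hm
    have h := hzero m hm
    have hterm : ∀ i : Fin (k+1), g i * S (m + (i:ℕ))
        = (if i = (⟨k - m, by omega⟩ : Fin (k+1)) then g i else 0)
          + (if i = (⟨n - m, by omega⟩ : Fin (k+1)) then -(g i) else 0) := by
      intro i
      have hi := i.isLt
      have hik : (i = (⟨k - m, by omega⟩ : Fin (k+1))) ↔ (m + (i:ℕ) = k) := by
        simp only [Fin.ext_iff, Fin.val_mk]
        omega
      have hin : (i = (⟨n - m, by omega⟩ : Fin (k+1))) ↔ (m + (i:ℕ) = n) := by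
        simp only [Fin.ext_iff, Fin.val_mk]
        omega
      by_cases h1 : m + (i:ℕ) = k
      · rw [h1, hSk, if_pos (hik.2 h1), if_neg (fun hc => by omega), mul_one, add_zero]
      · by_cases h2 : m + (i:ℕ) = n
        · rw [h2, hSn, if_neg (fun hc => h1 (hik.1 hc)), if_pos (hin.2 h2)]
          ring
        · rw [hS0 (m + (i:ℕ)) (by omega) h1 h2, if_neg (fun hc => h1 (hik.1 hc)),
            if_neg (fun hc => h2 (hin.1 hc)), mul_zero, add_zero]
    rw [Finset.sum_congr rfl (fun i _ => hterm i), Finset.sum_add_distrib,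
      Finset.sum_ite_eq' Finset.univ, Finset.sum_ite_eq' Finset.univ,
      if_pos (Finset.mem_univ _), if_pos (Finset.mem_univ _)] at h
    linear_combination h
  -- all coefficients g are equal
  have hall : ∀ t (ht : t ≤ k), g ⟨t, by omega⟩ = g ⟨0, by omega⟩ := by
    intro t
    induction t with
    | zero => intro _; rfl
    | succ t ih =>
      intro ht
      have h1 := hstep (n - t) (by omega)
      have e1 : (⟨k - (n - t), by omega⟩ : Fin (k+1)) = ⟨t+1, by omega⟩ :=
        Fin.ext (by simp only [Fin.val_mk]; omega)
      have e2 : (⟨n - (n - t), by omega⟩ : Fin (k+1)) = ⟨t, by omega⟩ :=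
        Fin.ext (by simp only [Fin.val_mk]; omega)
      rw [e1, e2] at h1
      rw [h1]
      exact ih (by omega)
  have hg0 : g ⟨0, by omega⟩ ≠ 0 := by
    intro hz
    apply hgi0
    have h := hall (i0 : ℕ) (by omega)
    rwa [show (⟨(i0:ℕ), by omega⟩ : Fin (k+1)) = i0 from Fin.ext rfl, hz] at h
  have hGj : ∀ j, ∑ i ∈ range (k+1), (al j)^i * (be j)^(k-i) = 0 := by
    intro j
    have h := hrel j
    have h2 : ∀ i : Fin (k+1), g i * ((al j)^(i:ℕ) * (be j)^(k-(i:ℕ)))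
        = g ⟨0, by omega⟩ * ((al j)^(i:ℕ) * (be j)^(k-(i:ℕ))) := by
      intro i
      have hgg := hall (i:ℕ) (by omega)
      rw [show (⟨(i:ℕ), by omega⟩ : Fin (k+1)) = i from Fin.ext rfl] at hgg
      rw [hgg]
    rw [Finset.sum_congr rfl (fun i _ => h2 i), ← Finset.mul_sum] at h
    have h3 := (mul_eq_zero.1 h).resolve_left hg0
    rw [← h3]
    exact (Fin.sum_univ_eq_sum_range (fun i => (al j)^i * (be j)^(k-i)) (k+1)).symm
  -- dichotomy for each point
  have hcase : ∀ j, (al j = 0 ∧ be j = 0) ∨ be j = - al j := by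
    intro j
    have hG := hGj j
    have hfac := geom_sum₂_mul (al j) (be j) (k+1)
    have hGS : ∑ i ∈ range (k+1), (al j)^i * (be j)^(k+1-1-i) = 0 := by
      rw [← hG]
      exact Finset.sum_congr rfl fun i hi => by rw [show k+1-1-i = k-i from by omega]
    rw [hGS, zero_mul] at hfac
    by_cases hab : al j = be j
    · left
      have hsum : ∑ i ∈ range (k+1), (al j)^i * (be j)^(k-i) = ((k+1 : ℕ):ℂ) * (al j)^k := by
        calc ∑ i ∈ range (k+1), (al j)^i * (be j)^(k-i)
            = ∑ _i ∈ range (k+1), (al j)^k := by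
              refine Finset.sum_congr rfl fun i hi => ?_
              rw [Finset.mem_range] at hi
              rw [← hab, ← pow_add]
              congr 1
              omega
          _ = ((k+1 : ℕ):ℂ) * (al j)^k := by
              rw [Finset.sum_const, Finset.card_range, nsmul_eq_mul]
      rw [hsum] at hG
      have hk1 : ((k+1 : ℕ):ℂ) ≠ 0 := Nat.cast_ne_zero.2 (by omega)
      have hak : (al j)^k = 0 := (mul_eq_zero.1 hG).resolve_left hk1
      have ha0 : al j = 0 := pow_eq_zero_iff (by omega : k ≠ 0) |>.1 hak
      exact ⟨ha0, by rw [← hab, ha0]⟩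
    · right
      have hpow : (al j)^(k+1) = (be j)^(k+1) := by linear_combination -hfac
      have ha0 : al j ≠ 0 := by
        intro h0
        apply hab
        have hb : (be j)^(k+1) = 0 := by rw [← hpow, h0, zero_pow (by omega : k+1 ≠ 0)]
        rw [h0, pow_eq_zero_iff (by omega : k+1 ≠ 0) |>.1 hb]
      have hw1 : (be j / al j) ^ (n+2) = 1 := by
        rw [div_pow, show n+2 = k+1 from by omega, ← hpow, div_self (pow_ne_zero _ ha0)]
      have hwK : be j / al j ∈ Subfield.closure {zeta k} :=
        div_mem (hmem j).2 (hmem j).1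
      rcases hroot _ hwK hw1 with h1 | h1
      · exact absurd ((div_eq_one_iff_eq ha0).1 h1).symm hab
      · have := (div_eq_iff ha0).1 h1
        rw [this]
        ring
  -- final contradiction
  have hterm2 : ∀ j : Fin r, lam j * (al j)^k * (be j)^(d-k)
      = (-1:ℂ)^n * (lam j * (al j)^d * (be j)^(d-d)) := by
    intro j
    rcases hcase j with ⟨h1, h2⟩ | h1
    · rw [h1, h2, zero_pow (by omega : k ≠ 0), zero_pow (by omega : d ≠ 0)]
      ring
    · rw [h1, show d - k = n from by omega, show d - d = 0 from by omega, neg_pow, pow_zero]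
      have hp : (al j)^k * (al j)^n = (al j)^d := by
        rw [← pow_add]
        congr 1
        omega
      linear_combination ((-1:ℂ)^n * lam j) * hp
  have hfin : S k = (-1:ℂ)^n * S d := by
    calc S k = ∑ j, lam j * (al j)^k * (be j)^(d-k) := by rw [hSdef]
      _ = ∑ j, (-1:ℂ)^n * (lam j * (al j)^d * (be j)^(d-d)) :=
          Finset.sum_congr rfl fun j _ => hterm2 j
      _ = (-1:ℂ)^n * S d := by rw [hSdef, ← Finset.mul_sum]
  have hSd : S d = 0 := hS0 d le_rfl (by omega) (by omega)
  rw [hSk, hSd, mul_zero] at hfin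
  exact one_ne_zero hfin

lemma sum_id (n : ℕ) (hn : 2 ≤ n) (x y : ℂ) :
    ∑ j ∈ range (n+2),
        ((if j = n+1 then (-1:ℂ) else if j = 0 then 1 else (zeta (n+1)^j - 1)/((n:ℂ)+1))
          * ((if j = n+1 then (0:ℂ) else 1) * x
              + (if j = n+1 then (1:ℂ) else if j = 0 then 0 else zeta (n+1)^j) * y)^(2*n+1))
      = (∑ j ∈ range (n+1), ((zeta (n+1)^j - 1)/((n:ℂ)+1)) * (x + zeta (n+1)^j * y)^(2*n+1))
        + x^(2*n+1) - y^(2*n+1) := by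
  rw [Finset.sum_range_succ, Finset.sum_range_succ' _ n,
    Finset.sum_range_succ' (fun j => ((zeta (n+1)^j - 1)/((n:ℂ)+1)) * (x + zeta (n+1)^j * y)^(2*n+1)) n]
  have h1 : ∀ j ∈ range n,
      ((if j+1 = n+1 then (-1:ℂ) else if j+1 = 0 then 1 else (zeta (n+1)^(j+1) - 1)/((n:ℂ)+1))
          * ((if j+1 = n+1 then (0:ℂ) else 1) * x
              + (if j+1 = n+1 then (1:ℂ) else if j+1 = 0 then 0 else zeta (n+1)^(j+1)) * y)^(2*n+1))
      = ((zeta (n+1)^(j+1) - 1)/((n:ℂ)+1)) * (x + zeta (n+1)^(j+1) * y)^(2*n+1) := by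
    intro j hj
    rw [mem_range] at hj
    rw [if_neg (by omega), if_neg (by omega), if_neg (by omega), if_neg (by omega),
      if_neg (by omega), one_mul]
  rw [Finset.sum_congr rfl h1]
  norm_num
  ring

lemma upper_id (n : ℕ) (hn : 2 ≤ n) :
    (MvPolynomial.C (((2*n+1).choose (n+1) : ℕ) : ℂ)
        * X 0 ^ n * X 1 ^ n * (X 0 - X 1) : MvPolynomial (Fin 2) ℂ)
      = ∑ j : Fin (n+2), MvPolynomial.C
            ((fun j : Fin (n+2) => if (j:ℕ) = n+1 then (-1:ℂ) else if (j:ℕ) = 0 then 1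
                else (zeta (n+1)^(j:ℕ) - 1)/((n:ℂ)+1)) j) *
          (MvPolynomial.C ((fun j : Fin (n+2) => if (j:ℕ) = n+1 then (0:ℂ) else 1) j) * X 0
            + MvPolynomial.C ((fun j : Fin (n+2) => if (j:ℕ) = n+1 then (1:ℂ)
                else if (j:ℕ) = 0 then 0 else zeta (n+1)^(j:ℕ)) j) * X 1) ^ (2*n+1) := by
  apply MvPolynomial.funext
  intro w
  simp only [map_sum, eval_mul, eval_pow, eval_C, eval_X, eval_add, eval_sub]
  rw [Fin.sum_univ_eq_sum_range (fun j : ℕ =>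
      (if j = n+1 then (-1:ℂ) else if j = 0 then 1 else (zeta (n+1)^j - 1)/((n:ℂ)+1))
        * ((if j = n+1 then (0:ℂ) else 1) * w 0
            + (if j = n+1 then (1:ℂ) else if j = 0 then 0 else zeta (n+1)^j) * w 1)^(2*n+1)) (n+2)]
  rw [sum_id n hn (w 0) (w 1)]
  exact scalar_id n hn (w 0) (w 1)

theorem rank_p_odd_over_zeta (k : ℕ) (hk : 3 ≤ k) :
    Lrank (Subfield.closure {zeta k}) (2 * k - 1)
      (MvPolynomial.C (((2 * k - 1).choose k : ℕ) : ℂ) *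
        X 0 ^ (k - 1) * X 1 ^ (k - 1) * (X 0 - X 1)) = ((k + 1 : ℕ) : ℕ∞) := by
  obtain ⟨n, rfl⟩ : ∃ n, k = n + 1 := ⟨k - 1, by omega⟩
  have hn : 2 ≤ n := by omega
  simp only [show 2 * (n+1) - 1 = 2*n+1 from by omega, show n + 1 - 1 = n from by omega]
  have hζK : zeta (n+1) ∈ Subfield.closure {zeta (n+1)} :=
    Subfield.subset_closure rfl
  have hnK : ((n:ℂ)+1) ∈ Subfield.closure {zeta (n+1)} := by
    have h := natCast_mem (Subfield.closure {zeta (n+1)}) (n+1)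
    push_cast at h
    exact h
  rw [Lrank]
  apply le_antisymm
  · apply sInf_le
    refine ⟨n+1+1, rfl, ?_, ?_, ?_, ?_, ?_⟩
    · exact fun j : Fin (n+2) => if (j:ℕ) = n+1 then (-1:ℂ) else if (j:ℕ) = 0 then 1
        else (zeta (n+1)^(j:ℕ) - 1)/((n:ℂ)+1)
    · exact fun j : Fin (n+2) => if (j:ℕ) = n+1 then (0:ℂ) else 1
    · exact fun j : Fin (n+2) => if (j:ℕ) = n+1 then (1:ℂ)
        else if (j:ℕ) = 0 then 0 else zeta (n+1)^(j:ℕ)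
    · intro j
      refine ⟨?_, ?_, ?_⟩ <;> split_ifs <;>
        first
          | exact neg_mem (one_mem _)
          | exact one_mem _
          | exact zero_mem _
          | exact div_mem (sub_mem (pow_mem hζK _) (one_mem _)) hnK
          | exact pow_mem hζK _
    · exact upper_id n hn
  · apply le_sInf
    rintro N ⟨r, rfl, lam, al, be, hmem, hid⟩
    rw [Nat.cast_le]
    by_contra hlt
    push_neg at hlt
    exact lower_aux n r hn (by omega) lam al be
      (fun j => ⟨(hmem j).2.1, (hmem j).2.2⟩)
      (fun w hw hp => root_in_K (n+1) (by omega) w hw hp)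
      hid
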